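/- arXiv:1705.07550 — 3 statements merged into one kernel-verified Lean document; each statement's English description precedes it below -/
import Mathlib

section
/- Let F : C([-τ,0];ℝ) → ℝ be defined by F(u) = p - u(u(0)) on the set of u with u(0) ∈ [-τ, 0]. If u is continuously differentiable and v is continuous, then the map (u,v) ↦ -u'(u(0))·v(0) - v(u(0)) is continuous on C¹ × C⁰ (with the C¹ norm on the first factor and the sup norm on the second). -/
open Real Set

/-- The map `(u,v) ↦ -u'(u(0))·v(0) - v(u(0))` (the derivative of the
sd-DDE functional `F(u) = p - u(u(0))`) is continuous on `C¹ × C⁰`: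
continuity at each `(u,v)` with respect to the `C¹`-norm in `u`
(sup norm of `u` and `u'` on `[-τ,0]`) and the sup norm in `v`. -/
theorem stmt7 (τ : ℝ) (hτ : 0 < τ)
    (u : ℝ → ℝ) (v : ℝ → ℝ)
    (hu : ContDiff ℝ 1 u) (hv : Continuous v)
    (hu0 : u 0 ∈ Icc (-τ) 0) :
    ∀ ε > 0, ∃ δ > 0, ∀ u₁ v₁ : ℝ → ℝ,
      ContDiff ℝ 1 u₁ → Continuous v₁ → u₁ 0 ∈ Icc (-τ) 0 →
      (∀ t ∈ Icc (-τ) 0, |u₁ t - u t| ≤ δ ∧ |deriv u₁ t - deriv u t| ≤ δ) →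
      (∀ t ∈ Icc (-τ) 0, |v₁ t - v t| ≤ δ) →
      |(-(deriv u₁ (u₁ 0) * v₁ 0) - v₁ (u₁ 0)) - (-(deriv u (u 0) * v 0) - v (u 0))| < ε := by
  intro ε hε
  have hd : Continuous (deriv u) := hu.continuous_deriv le_rfl
  have hcompact : IsCompact (Icc (-τ) (0:ℝ)) := isCompact_Icc
  set C : ℝ := 2 * |v 0| + |deriv u (u 0)| + 5 with hCdef
  have hC : 0 < C := by positivity
  set ε' : ℝ := ε / C with hε'def
  have hε' : 0 < ε' := div_pos hε hC
  have hεeq : ε' * C = ε := div_mul_cancel₀ ε (ne_of_gt hC)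
  have hud : UniformContinuousOn (deriv u) (Icc (-τ) 0) :=
    hcompact.uniformContinuousOn_of_continuous hd.continuousOn
  have hvd : UniformContinuousOn v (Icc (-τ) 0) :=
    hcompact.uniformContinuousOn_of_continuous hv.continuousOn
  rw [Metric.uniformContinuousOn_iff] at hud hvd
  obtain ⟨δ₁, hδ₁, H1⟩ := hud ε' hε'
  obtain ⟨δ₂, hδ₂, H2⟩ := hvd ε' hε'
  refine ⟨min (min (δ₁/2) (δ₂/2)) (min ε' 1), by positivity, ?_⟩
  set δ : ℝ := min (min (δ₁/2) (δ₂/2)) (min ε' 1) with hδdef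
  intro u₁ v₁ hu₁ hv₁ hu₁0 hU hV
  have h0mem : (0:ℝ) ∈ Icc (-τ) (0:ℝ) := ⟨by linarith, le_refl 0⟩
  obtain ⟨hU0, hD0⟩ := hU 0 h0mem
  obtain ⟨hUU, hDU⟩ := hU (u₁ 0) hu₁0
  have hVU := hV (u₁ 0) hu₁0
  have hδε' : δ ≤ ε' := le_trans (min_le_right _ _) (min_le_left _ _)
  have hδ1 : δ ≤ 1 := le_trans (min_le_right _ _) (min_le_right _ _)
  have hδd1 : δ ≤ δ₁ / 2 := le_trans (min_le_left _ _) (min_le_left _ _)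
  have hδd2 : δ ≤ δ₂ / 2 := le_trans (min_le_left _ _) (min_le_right _ _)
  have hUdist1 : dist (u₁ 0) (u 0) < δ₁ := by
    rw [Real.dist_eq]; linarith
  have hUdist2 : dist (u₁ 0) (u 0) < δ₂ := by
    rw [Real.dist_eq]; linarith
  have hderiv_close : |deriv u (u₁ 0) - deriv u (u 0)| < ε' := by
    have := H1 (u₁ 0) hu₁0 (u 0) hu0 hUdist1
    simpa [Real.dist_eq] using this
  have hv_close : |v (u₁ 0) - v (u 0)| < ε' := by
    have := H2 (u₁ 0) hu₁0 (u 0) hu0 hUdist2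
    simpa [Real.dist_eq] using this
  set a₁ := deriv u₁ (u₁ 0)
  set a := deriv u (u 0)
  set b₁ := v₁ 0
  set b := v 0
  -- |a₁ - a| ≤ δ + ε'
  have ha : |a₁ - a| ≤ δ + ε' := by
    calc |a₁ - a| = |(a₁ - deriv u (u₁ 0)) + (deriv u (u₁ 0) - a)| := by ring_nf
      _ ≤ |a₁ - deriv u (u₁ 0)| + |deriv u (u₁ 0) - a| := abs_add_le _ _
      _ ≤ δ + ε' := add_le_add hDU hderiv_close.le
  have hb : |b₁| ≤ |b| + 1 := by
    calc |b₁| = |(b₁ - b) + b| := by ring_nf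
      _ ≤ |b₁ - b| + |b| := abs_add_le _ _
      _ ≤ |b| + 1 := by have := hV 0 h0mem; linarith
  have hbb : |b₁ - b| ≤ δ := hV 0 h0mem
  have hc : |v₁ (u₁ 0) - v (u 0)| ≤ δ + ε' := by
    calc |v₁ (u₁ 0) - v (u 0)|
        = |(v₁ (u₁ 0) - v (u₁ 0)) + (v (u₁ 0) - v (u 0))| := by ring_nf
      _ ≤ |v₁ (u₁ 0) - v (u₁ 0)| + |v (u₁ 0) - v (u 0)| := abs_add_le _ _
      _ ≤ δ + ε' := add_le_add hVU hv_close.le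
  have hsplit : |(-(a₁ * b₁) - v₁ (u₁ 0)) - (-(a * b) - v (u 0))|
      ≤ |a₁ - a| * |b₁| + |a| * |b₁ - b| + |v₁ (u₁ 0) - v (u 0)| := by
    calc |(-(a₁ * b₁) - v₁ (u₁ 0)) - (-(a * b) - v (u 0))|
        = |(-((a₁ - a) * b₁ + a * (b₁ - b))) + (-(v₁ (u₁ 0) - v (u 0)))| := by ring_nf
      _ ≤ |(-((a₁ - a) * b₁ + a * (b₁ - b)))| + |(-(v₁ (u₁ 0) - v (u 0)))| := abs_add_le _ _
      _ = |(a₁ - a) * b₁ + a * (b₁ - b)| + |v₁ (u₁ 0) - v (u 0)| := by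
            rw [abs_neg, abs_neg]
      _ ≤ |(a₁ - a) * b₁| + |a * (b₁ - b)| + |v₁ (u₁ 0) - v (u 0)| := by
            have := abs_add_le ((a₁ - a) * b₁) (a * (b₁ - b)); linarith
      _ = |a₁ - a| * |b₁| + |a| * |b₁ - b| + |v₁ (u₁ 0) - v (u 0)| := by
            rw [abs_mul, abs_mul]
  have habs1 : (0:ℝ) ≤ |a₁ - a| := abs_nonneg _
  have habs2 : (0:ℝ) ≤ |b₁| := abs_nonneg _
  have habs3 : (0:ℝ) ≤ |a| := abs_nonneg _
  have habs4 : (0:ℝ) ≤ |b| := abs_nonneg _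
  have habs5 : (0:ℝ) ≤ |b₁ - b| := abs_nonneg _
  -- total ≤ (δ+ε')(|b|+1) + |a|δ + (δ+ε') ≤ 2ε'(|b|+1) + |a|ε' + 2ε' = ε'(2|b|+|a|+4) < ε
  have hbound : |a₁ - a| * |b₁| + |a| * |b₁ - b| + |v₁ (u₁ 0) - v (u 0)|
      ≤ ε' * (2 * |b| + |a| + 4) := by
    nlinarith [mul_le_mul ha hb habs2 (by positivity : (0:ℝ) ≤ δ + ε'),
      mul_le_mul_of_nonneg_left hbb habs3, mul_le_mul_of_nonneg_left hδε' habs3]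
  have hlt : ε' * (2 * |b| + |a| + 4) < ε := by
    nlinarith
  linarith [hsplit, hbound]
end

section
/- Suppose u : [-τ_max, ∞) → ℝⁿ is continuous, continuously differentiable on [0,∞), and satisfies u'(t) = f(u(t), u(t - τ(u(t)))) for t ≥ 0, where f and τ are continuously differentiable and 0 ≤ τ ≤ τ_max. Then u is twice continuously differentiable on (τ_max, ∞), and u''(t) = ∂₁f·u'(t) + ∂₂f·u'(t - τ(u(t)))·(1 - ∇τ(u(t))·u'(t)), where the partial derivatives of f are evaluated at (u(t), u(t - τ(u(t)))). -/
open Set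

/-- Smoothing for sd-DDEs (case ℓ = 2): if `u` is continuous, continuously
differentiable on `[0,∞)` with `u'(t) = f(u(t), u(t - τ(u(t))))` for `t ≥ 0`,
where `f, τ` are `C¹` and `0 ≤ τ ≤ τ_max`, then `u` is twice continuously
differentiable on `(τ_max, ∞)` with
`u''(t) = Df(u(t), u(t-τ(u(t)))) (u'(t), (1 - ∇τ(u(t))·u'(t))·u'(t-τ(u(t))))`,
which equals `∂₁f·u'(t) + ∂₂f·u'(t-τ(u(t)))·(1 - ∇τ(u(t))·u'(t))`. -/
theorem stmt10 (n : ℕ) (τmax : ℝ) (hτmax : 0 ≤ τmax)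
    (u u' : ℝ → EuclideanSpace ℝ (Fin n))
    (f : EuclideanSpace ℝ (Fin n) → EuclideanSpace ℝ (Fin n) → EuclideanSpace ℝ (Fin n))
    (tau : EuclideanSpace ℝ (Fin n) → ℝ)
    (hf : ContDiff ℝ 1 (fun p : EuclideanSpace ℝ (Fin n) × EuclideanSpace ℝ (Fin n) => f p.1 p.2))
    (htau : ContDiff ℝ 1 tau)
    (htaurange : ∀ x, tau x ∈ Icc 0 τmax)
    (hu : Continuous u)
    (hu' : ∀ s ∈ Ioi (0 : ℝ), HasDerivAt u (u' s) s)
    (hu'c : ContinuousOn u' (Ici (0 : ℝ)))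
    (hdde : ∀ s ∈ Ici (0 : ℝ), u' s = f (u s) (u (s - tau (u s)))) :
    (∀ t ∈ Ioi τmax,
      HasDerivAt u'
        (fderiv ℝ (fun p : EuclideanSpace ℝ (Fin n) × EuclideanSpace ℝ (Fin n) => f p.1 p.2)
          (u t, u (t - tau (u t)))
          (u' t, (1 - fderiv ℝ tau (u t) (u' t)) • u' (t - tau (u t)))) t) ∧
    ContinuousOn (fun t =>
        fderiv ℝ (fun p : EuclideanSpace ℝ (Fin n) × EuclideanSpace ℝ (Fin n) => f p.1 p.2)
          (u t, u (t - tau (u t)))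
          (u' t, (1 - fderiv ℝ tau (u t) (u' t)) • u' (t - tau (u t)))) (Ioi τmax) := by
  set F := fun p : EuclideanSpace ℝ (Fin n) × EuclideanSpace ℝ (Fin n) => f p.1 p.2 with hF
  have hhpos : ∀ t ∈ Ioi τmax, 0 < t - tau (u t) := by
    intro t ht
    have := (htaurange (u t)).2
    simp only [mem_Ioi] at ht
    linarith
  constructor
  · intro t ht
    have htpos : (0:ℝ) < t := lt_of_le_of_lt hτmax ht
    have hht := hhpos t ht
    -- derivative of s ↦ s - tau (u s) at t
    have hdu : HasDerivAt u (u' t) t := hu' t htpos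
    have hdtau : HasDerivAt (fun s => tau (u s)) (fderiv ℝ tau (u t) (u' t)) t :=
      ((htau.differentiable one_ne_zero (u t)).hasFDerivAt).comp_hasDerivAt t hdu
    have hdh : HasDerivAt (fun s => s - tau (u s)) (1 - fderiv ℝ tau (u t) (u' t)) t :=
      (hasDerivAt_id t).sub hdtau
    have hdu2 : HasDerivAt (fun s => u (s - tau (u s)))
        ((1 - fderiv ℝ tau (u t) (u' t)) • u' (t - tau (u t))) t :=
      (hu' _ hht).scomp t hdh
    have hpair : HasDerivAt (fun s => (u s, u (s - tau (u s))))
        (u' t, (1 - fderiv ℝ tau (u t) (u' t)) • u' (t - tau (u t))) t :=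
      HasDerivAt.prodMk hdu hdu2
    have hdF : HasFDerivAt F (fderiv ℝ F (u t, u (t - tau (u t)))) (u t, u (t - tau (u t))) :=
      (hf.differentiable one_ne_zero _).hasFDerivAt
    have hg : HasDerivAt (fun s => f (u s) (u (s - tau (u s))))
        (fderiv ℝ F (u t, u (t - tau (u t)))
          (u' t, (1 - fderiv ℝ tau (u t) (u' t)) • u' (t - tau (u t)))) t :=
      (hdF.comp_hasDerivAt t hpair :)
    refine hg.congr_of_eventuallyEq ?_
    filter_upwards [Ioi_mem_nhds htpos] with s hs
    exact hdde s (mem_Ici.mpr (le_of_lt hs))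
  · have hh : ContinuousOn (fun t => t - tau (u t)) (Ioi τmax) :=
      (continuous_id.sub (htau.continuous.comp hu)).continuousOn
    have hmaps : MapsTo (fun t => t - tau (u t)) (Ioi τmax) (Ici (0:ℝ)) := fun t ht =>
      le_of_lt (hhpos t ht)
    have hu'comp : ContinuousOn (fun t => u' (t - tau (u t))) (Ioi τmax) :=
      hu'c.comp hh hmaps
    have hu'on : ContinuousOn u' (Ioi τmax) :=
      hu'c.mono (fun t ht => le_of_lt (lt_of_le_of_lt hτmax ht))
    have hpair : ContinuousOn (fun t => (u t, u (t - tau (u t)))) (Ioi τmax) :=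
      ContinuousOn.prodMk (hu.continuousOn) (hu.comp_continuousOn hh)
    have hDF : ContinuousOn (fun t => fderiv ℝ F (u t, u (t - tau (u t)))) (Ioi τmax) :=
      (hf.continuous_fderiv one_ne_zero).comp_continuousOn hpair
    have hscal : ContinuousOn (fun t => 1 - fderiv ℝ tau (u t) (u' t)) (Ioi τmax) := by
      have hDtau : ContinuousOn (fun t => fderiv ℝ tau (u t)) (Ioi τmax) :=
        ((htau.continuous_fderiv one_ne_zero).comp hu).continuousOn
      exact continuousOn_const.sub (hDtau.clm_apply hu'on)
    exact hDF.clm_apply (ContinuousOn.prodMk hu'on (hscal.smul hu'comp))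
end

section
/- Let A be a linear functional on continuous functions of the form Au = Σ A_j u(-τ_j), and let λ ∈ ℂ be such that Δ(λ) = λI - Σ A_j e^{-λτ_j} is invertible. Then for every continuous v : [-τ_max,0] → ℂⁿ, the function x(θ) = e^{λθ}x₀ + ∫_θ⁰ e^{λ(θ-s)} v(s) ds with x₀ = Δ(λ)⁻¹ [ v(0) + A(θ ↦ ∫_θ⁰ e^{λ(θ-s)}v(s) ds) ] is the unique C¹ solution of the resolvent system: λx(0) - Ax = v(0) and λx(θ) - x'(θ) = v(θ) for all θ ∈ [-τ_max, 0]. -/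
open Complex Set intervalIntegral

private lemma my_sum_mulVec {ι : Type*} (s : Finset ι) {n : ℕ}
    (A : ι → Matrix (Fin n) (Fin n) ℂ) (x : Fin n → ℂ) :
    (∑ j ∈ s, A j).mulVec x = ∑ j ∈ s, (A j).mulVec x := by
  ext i
  simp only [Matrix.mulVec, dotProduct, Finset.sum_apply, Matrix.sum_apply,
    Finset.sum_mul]
  rw [Finset.sum_comm]

private lemma my_exp_deriv (μ : ℂ) (θ : ℝ) :
    HasDerivAt (fun t : ℝ => Complex.exp (μ * t)) (μ * Complex.exp (μ * θ)) θ := by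
  have h1 : HasDerivAt (fun z : ℂ => Complex.exp (μ * z)) (Complex.exp (μ * θ) * μ) (θ : ℂ) := by
    simpa [Function.comp_def] using (Complex.hasDerivAt_exp (μ * θ)).comp (θ : ℂ)
      ((hasDerivAt_id (θ : ℂ)).const_mul μ)
  simpa [mul_comm] using h1.comp_ofReal

/-- Resolvent formula for a linear DDE with discrete delays: if `Δ(λ)` is
invertible then
`x(θ) = e^{λθ}x₀ + ∫_θ⁰ e^{λ(θ-s)} v(s) ds` with
`x₀ = Δ(λ)⁻¹[v(0) + A(θ ↦ ∫_θ⁰ e^{λ(θ-s)}v(s) ds)]`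
is the unique `C¹` solution of `λx(0) - Ax = v(0)`,
`λx(θ) - x'(θ) = v(θ)` on `[-τ_max,0]`. -/
theorem stmt14 (n m : ℕ) (M : Fin m → Matrix (Fin n) (Fin n) ℂ)
    (d : Fin m → ℝ) (τmax : ℝ) (hτmax : 0 < τmax) (hd : ∀ j, d j ∈ Icc 0 τmax)
    (lam : ℂ)
    (hinv : IsUnit ((lam • (1 : Matrix (Fin n) (Fin n) ℂ)
        - ∑ j, Complex.exp (-(lam * d j)) • M j).det))
    (v : ℝ → Fin n → ℂ) (hv : ContinuousOn v (Icc (-τmax) 0))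
    (J : ℝ → Fin n → ℂ)
    (hJ : ∀ θ : ℝ, J θ = ∫ s in θ..0, Complex.exp (lam * (θ - s)) • v s)
    (x₀ : Fin n → ℂ)
    (hx₀ : x₀ = (lam • (1 : Matrix (Fin n) (Fin n) ℂ)
        - ∑ j, Complex.exp (-(lam * d j)) • M j)⁻¹.mulVec
          (v 0 + ∑ j, (M j).mulVec (J (-(d j)))))
    (x : ℝ → Fin n → ℂ)
    (hx : ∀ θ : ℝ, x θ = Complex.exp (lam * θ) • x₀ + J θ) :
    (lam • x 0 - ∑ j, (M j).mulVec (x (-(d j))) = v 0) ∧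
    (∀ θ ∈ Icc (-τmax) 0, HasDerivWithinAt x (lam • x θ - v θ) (Icc (-τmax) 0) θ) ∧
    (∀ y : ℝ → Fin n → ℂ,
      (∀ θ ∈ Icc (-τmax) 0, HasDerivWithinAt y (lam • y θ - v θ) (Icc (-τmax) 0) θ) →
      (lam • y 0 - ∑ j, (M j).mulVec (y (-(d j))) = v 0) →
      EqOn y x (Icc (-τmax) 0)) := by
  have h0S : (0 : ℝ) ∈ Icc (-τmax) 0 := ⟨by linarith, le_refl 0⟩
  have hdS : ∀ j, (-(d j)) ∈ Icc (-τmax) 0 := fun j =>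
    ⟨by have := (hd j).2; linarith, by have := (hd j).1; linarith⟩
  -- the matrix Δ
  set Δ : Matrix (Fin n) (Fin n) ℂ :=
    lam • (1 : Matrix (Fin n) (Fin n) ℂ) - ∑ j, Complex.exp (-(lam * d j)) • M j with hΔ
  -- the auxiliary integrand and integral
  have hgc : ContinuousOn (fun s : ℝ => Complex.exp (-(lam * s)) • v s) (Icc (-τmax) 0) := by
    apply ContinuousOn.smul (f := fun s : ℝ => Complex.exp (-(lam * s))) _ hv
    exact (Complex.continuous_exp.comp
      ((continuous_const.mul Complex.continuous_ofReal).neg)).continuousOn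
  set K : ℝ → Fin n → ℂ := fun θ => ∫ s in θ..0, Complex.exp (-(lam * s)) • v s with hK
  have hKint : ∀ θ ∈ Icc (-τmax) 0,
      IntervalIntegrable (fun s : ℝ => Complex.exp (-(lam * s)) • v s)
        MeasureTheory.volume θ 0 := by
    intro θ hθ
    apply ContinuousOn.intervalIntegrable
    apply hgc.mono
    rw [Set.uIcc_of_le hθ.2]
    exact Icc_subset_Icc hθ.1 le_rfl
  have hJK : ∀ θ : ℝ, J θ = Complex.exp (lam * θ) • K θ := by
    intro θ
    rw [hJ θ, hK, ← intervalIntegral.integral_smul]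
    apply intervalIntegral.integral_congr
    intro s _
    simp only [smul_smul, ← Complex.exp_add]
    congr 2
    ring
  have hxK : ∀ θ : ℝ, x θ = Complex.exp (lam * θ) • (x₀ + K θ) := by
    intro θ; rw [hx θ, hJK θ, smul_add]
  -- FTC: derivative of K
  have hKd : ∀ θ ∈ Icc (-τmax) 0,
      HasDerivWithinAt K (-(Complex.exp (-(lam * θ)) • v θ)) (Icc (-τmax) 0) θ := by
    intro θ hθ
    haveI : Fact (θ ∈ Icc (-τmax) 0) := ⟨hθ⟩
    exact intervalIntegral.integral_hasDerivWithinAt_left (hKint θ hθ)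
      (hgc.stronglyMeasurableAtFilter_nhdsWithin measurableSet_Icc θ) (hgc θ hθ)
  -- derivative of x
  have hxd : ∀ θ ∈ Icc (-τmax) 0,
      HasDerivWithinAt x (lam • x θ - v θ) (Icc (-τmax) 0) θ := by
    intro θ hθ
    have h1 := ((my_exp_deriv lam θ).hasDerivWithinAt.smul ((hKd θ hθ).const_add x₀))
    have hfun : x = fun t : ℝ => Complex.exp (lam * t) • (x₀ + K t) := funext hxK
    rw [hxK θ, hfun]
    refine HasDerivWithinAt.congr_deriv h1 ?_
    symm
    rw [smul_neg, smul_smul, smul_smul, ← Complex.exp_add, add_neg_cancel,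
      Complex.exp_zero, one_smul]
    abel
  -- boundary identity for x
  have hx0 : x 0 = x₀ := by
    rw [hx 0, hJ 0, intervalIntegral.integral_same]
    norm_num
  have hΔx₀ : Δ.mulVec x₀ = v 0 + ∑ j, (M j).mulVec (J (-(d j))) := by
    rw [hx₀, Matrix.mulVec_mulVec, Matrix.mul_nonsing_inv _ hinv, Matrix.one_mulVec]
  have hxdj : ∀ j, x (-(d j)) = Complex.exp (-(lam * d j)) • x₀ + J (-(d j)) := by
    intro j
    rw [hx (-(d j))]
    congr 3
    push_cast
    ring
  have hbd : lam • x 0 - ∑ j, (M j).mulVec (x (-(d j))) = v 0 := by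
    have : ∑ j, (M j).mulVec (x (-(d j)))
        = ∑ j, (Complex.exp (-(lam * d j)) • M j).mulVec x₀
          + ∑ j, (M j).mulVec (J (-(d j))) := by
      rw [← Finset.sum_add_distrib]
      apply Finset.sum_congr rfl
      intro j _
      rw [hxdj j, Matrix.mulVec_add, Matrix.mulVec_smul, Matrix.smul_mulVec]
    rw [hx0, this, ← my_sum_mulVec]
    have h2 : lam • x₀ = (lam • (1 : Matrix (Fin n) (Fin n) ℂ)).mulVec x₀ := by
      rw [Matrix.smul_mulVec, Matrix.one_mulVec]
    rw [h2, ← sub_sub, ← Matrix.sub_mulVec, ← hΔ, hΔx₀]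
    abel
  refine ⟨hbd, hxd, ?_⟩
  -- uniqueness
  intro y hyd hyb
  set w : ℝ → Fin n → ℂ := fun t => y t - x t with hw
  have hwd : ∀ θ ∈ Icc (-τmax) 0,
      HasDerivWithinAt w (lam • w θ) (Icc (-τmax) 0) θ := by
    intro θ hθ
    have := (hyd θ hθ).sub (hxd θ hθ)
    refine HasDerivWithinAt.congr_deriv this ?_
    symm
    simp only [hw, smul_sub]
    abel
  set z : ℝ → Fin n → ℂ := fun t => Complex.exp (-(lam * t)) • w t with hz
  have hzd : ∀ θ ∈ Icc (-τmax) 0, HasDerivWithinAt z 0 (Icc (-τmax) 0) θ := by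
    intro θ hθ
    have hc : HasDerivAt (fun t : ℝ => Complex.exp (-(lam * t)))
        (-lam * Complex.exp (-(lam * θ))) θ := by
      have := my_exp_deriv (-lam) θ
      simpa [neg_mul] using this
    have h1 := hc.hasDerivWithinAt.smul (hwd θ hθ)
    refine HasDerivWithinAt.congr_deriv h1 ?_
    symm
    rw [smul_smul, ← add_smul,
      show Complex.exp (-(lam * θ)) * lam + -lam * Complex.exp (-(lam * θ)) = 0 by ring,
      zero_smul]
  have hzcont : ContinuousOn z (Icc (-τmax) 0) :=
    fun t ht => (hzd t ht).continuousWithinAt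
  have hconst := constant_of_has_deriv_right_zero hzcont
    (fun t ht => (hzd t (Ico_subset_Icc_self ht)).mono_of_mem_nhdsWithin
      (Icc_mem_nhdsGE_of_mem ht))
  have hz0 : z 0 = w 0 := by simp [hz]
  have hwθ : ∀ θ ∈ Icc (-τmax) 0, w θ = Complex.exp (lam * θ) • w 0 := by
    intro θ hθ
    have h1 : z θ = z 0 := by rw [hconst θ hθ, hconst 0 h0S]
    rw [hz0] at h1
    have h2 : Complex.exp (lam * θ) • z θ = w θ := by
      simp only [hz]
      rw [smul_smul, ← Complex.exp_add, add_neg_cancel, Complex.exp_zero, one_smul]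
    rw [← h2, h1]
  -- boundary for w
  have hw0 : w 0 = 0 := by
    have hb : lam • w 0 - ∑ j, (M j).mulVec (w (-(d j))) = 0 := by
      simp only [hw, smul_sub, Matrix.mulVec_sub, Finset.sum_sub_distrib]
      rw [show lam • y 0 - lam • x 0 - (∑ j, (M j).mulVec (y (-(d j)))
          - ∑ j, (M j).mulVec (x (-(d j))))
        = (lam • y 0 - ∑ j, (M j).mulVec (y (-(d j))))
          - (lam • x 0 - ∑ j, (M j).mulVec (x (-(d j)))) by abel]
      rw [hyb, hbd, sub_self]
    have hwdj : ∀ j, w (-(d j)) = Complex.exp (-(lam * d j)) • w 0 := by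
      intro j
      rw [hwθ (-(d j)) (hdS j)]
      congr 2
      push_cast
      ring
    have hΔw : Δ.mulVec (w 0) = 0 := by
      rw [hΔ, Matrix.sub_mulVec, Matrix.smul_mulVec, Matrix.one_mulVec, my_sum_mulVec]
      rw [← hb]
      congr 1
      apply Finset.sum_congr rfl
      intro j _
      rw [hwdj j, Matrix.mulVec_smul, Matrix.smul_mulVec]
    have := congrArg (Δ⁻¹.mulVec) hΔw
    rwa [Matrix.mulVec_mulVec, Matrix.nonsing_inv_mul _ hinv, Matrix.one_mulVec,
      Matrix.mulVec_zero] at this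
  intro θ hθ
  have := hwθ θ hθ
  rw [hw0, smul_zero, hw, sub_eq_zero] at this
  exact this
end
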